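/- Let G be a connected planar cubic graph and let G' be the graph obtained by subdividing every edge of G once. Interpret G' as a positive SAT graph where the original vertices of G are clauses (each clause containing its three incident subdivision variables) and the subdivision vertices are variables. Then G has a spanning 2-matching if and only if this positive NAE 3-SAT instance has a satisfying not-all-equal assignment. -/
import Mathlib


open SimpleGraph

def IsPlanar {V : Type} (G : SimpleGraph V) : Prop :=
  ∃ pos : V → ℝ × ℝ, Function.Injective pos ∧
    ∃ arc : ∀ ⦃u w : V⦄, G.Adj u w → Path (pos u) (pos w),
      (∀ ⦃u w : V⦄ (h : G.Adj u w), Function.Injective (arc h)) ∧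
      (∀ ⦃u w x y : V⦄ (h₁ : G.Adj u w) (h₂ : G.Adj x y),
        (s(u, w) : Sym2 V) ≠ s(x, y) →
        ∀ t₁ t₂ : unitInterval, (arc h₁) t₁ = (arc h₂) t₂ →
          (arc h₁) t₁ ∈ pos '' ({u, w} ∩ {x, y} : Set V))

/-- for a connected planar cubic graph `G`, subdividing every edge once
and reading the result as a positive SAT graph (original vertices are clauses, each
clause consisting of its three incident subdivision variables, i.e. edges), `G` has
a spanning 2-matching iff the resulting positive NAE 3-SAT instance is satisfiable. -/
theorem spanning_two_matching_iff_NAE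
    {V : Type} [Fintype V]
    (G : SimpleGraph V) (hconn : G.Connected) (hplanar : IsPlanar G)
    (hcubic : ∀ v : V, (G.neighborSet v).ncard = 3) :
    (∃ F : Set (Sym2 V), F ⊆ G.edgeSet ∧
        ∀ v : V, 1 ≤ {e ∈ F | v ∈ e}.ncard ∧ {e ∈ F | v ∈ e}.ncard ≤ 2) ↔
      (∃ σ : Sym2 V → Bool, ∀ v : V,
        (∃ e ∈ G.edgeSet, v ∈ e ∧ σ e = true) ∧
        (∃ e ∈ G.edgeSet, v ∈ e ∧ σ e = false)) := by
  classical
  have hfin : ∀ s : Set (Sym2 V), s.Finite := fun s => s.toFinite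
  have hinc : ∀ v : V, (G.incidenceSet v).ncard = 3 := by
    intro v
    rw [← hcubic v, Set.ncard_eq_toFinset_card', Set.ncard_eq_toFinset_card',
      Set.toFinset_card, Set.toFinset_card]
    exact Fintype.card_congr (G.incidenceSetEquivNeighborSet v)
  constructor
  · rintro ⟨F, hF, hdeg⟩
    refine ⟨fun e => decide (e ∈ F), fun v => ?_⟩
    obtain ⟨h1, h2⟩ := hdeg v
    constructor
    · obtain ⟨e, he⟩ := Set.nonempty_of_ncard_ne_zero (by omega : {e ∈ F | v ∈ e}.ncard ≠ 0)
      exact ⟨e, hF he.1, he.2, by simp [he.1]⟩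
    · -- there is an incident edge not in F
      have hsub : {e ∈ F | v ∈ e} ⊆ G.incidenceSet v := by
        rintro e ⟨heF, hev⟩; exact ⟨hF heF, hev⟩
      have hne : {e ∈ F | v ∈ e} ≠ G.incidenceSet v := by
        intro h; rw [h, hinc v] at h2; omega
      obtain ⟨e, heI, heS⟩ := Set.exists_of_ssubset (hsub.ssubset_of_ne hne)
      refine ⟨e, heI.1, heI.2, ?_⟩
      simp only [Set.mem_setOf_eq, not_and] at heS
      by_cases heF : e ∈ F
      · exact absurd heI.2 (heS heF)
      · simp [heF]
  · rintro ⟨σ, hσ⟩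
    refine ⟨{e ∈ G.edgeSet | σ e = true}, fun e he => he.1, fun v => ?_⟩
    obtain ⟨⟨et, het, hvt, hσt⟩, ⟨ef, hef, hvf, hσf⟩⟩ := hσ v
    have hset : {e ∈ {e ∈ G.edgeSet | σ e = true} | v ∈ e}
        = {e ∈ G.incidenceSet v | σ e = true} := by
      ext e; constructor
      · rintro ⟨⟨h1, h2⟩, h3⟩; exact ⟨⟨h1, h3⟩, h2⟩
      · rintro ⟨⟨h1, h3⟩, h2⟩; exact ⟨⟨h1, h2⟩, h3⟩
    rw [hset]
    constructor
    · have : et ∈ {e ∈ G.incidenceSet v | σ e = true} := ⟨⟨het, hvt⟩, hσt⟩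
      exact (Set.ncard_pos (hfin _)).mpr ⟨et, this⟩
    · have hss : {e ∈ G.incidenceSet v | σ e = true} ⊂ G.incidenceSet v := by
        refine ⟨fun e he => he.1, fun h => ?_⟩
        have := h ⟨hef, hvf⟩
        rw [this.2] at hσf; exact Bool.noConfusion hσf
      have := Set.ncard_lt_ncard hss (hfin _)
      rw [hinc v] at this; omega
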